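/- If the instance admits a schedule in which every machine has load at least T̆, then Santa-MILP(T̆) has an integral feasible solution, i.e., there exist z_{C,t} ∈ ℕ and x_{j,t} ∈ {0,1} satisfying constraints (1')–(4'). -/

import Mathlib

open Finset
open scoped Classical ENNReal

noncomputable section

variable {J : Type*} [Fintype J] {K : ℕ}

/-- The set `B_t` of big processing-time values occurring for machine type `t`. -/
def sBig (ε T : ℝ) (p : Fin K → J → ℝ) (t : Fin K) : Finset ℝ :=
  (Finset.univ.image (p t)).filter fun v => ε ^ 2 * T < v

/-- The set `S_t` of small processing-time values occurring for machine type `t`. -/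
def sSmall (ε T : ℝ) (p : Fin K → J → ℝ) (t : Fin K) : Finset ℝ :=
  (Finset.univ.image (p t)).filter fun v => v ≤ ε ^ 2 * T

/-- The size of a configuration `C` for machine type `t`. -/
def sSize (ε T : ℝ) (p : Fin K → J → ℝ) (t : Fin K) (C : ℝ → ℕ) : ℝ :=
  ∑ v ∈ sBig ε T p t, (C v : ℝ) * v

/-- `P = ⌊T̆⌋ + max_t max B_t` (big values are positive integers, so taking `⌈v⌉₊`
is harmless and allows a `Finset.sup` over `ℕ`). -/
def sP (ε T Tb : ℝ) (p : Fin K → J → ℝ) : ℝ :=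
  (⌊Tb⌋₊ : ℝ) +
    ((((Finset.univ : Finset (Fin K)).biUnion fun t => sBig ε T p t).sup fun v => ⌈v⌉₊ : ℕ) : ℝ)

/-- `C` is a configuration for machine type `t`: supported on `B_t`, of size at most `P`. -/
def sIsConf (ε T Tb : ℝ) (p : Fin K → J → ℝ) (t : Fin K) (C : ℝ → ℕ) : Prop :=
  (∀ v ∉ sBig ε T p t, C v = 0) ∧ sSize ε T p t C ≤ sP ε T Tb p

/-- Feasibility of the Santa Claus MILP(T̆): constraints (1')-(4') of the paper.
A configuration is big if its size exceeds `⌊T̆⌋` and small otherwise. -/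
def SantaFeasible (ε T Tb : ℝ) (p : Fin K → J → ℝ) (m : Fin K → ℕ)
    (z : (ℝ → ℕ) → Fin K → ℝ≥0∞) (x : J → Fin K → ℝ≥0∞) : Prop :=
  (∀ C t, ¬ sIsConf ε T Tb p t C → z C t = 0) ∧
  (∀ t, ∑' C : ℝ → ℕ, z C t = m t) ∧
  (∀ j, ∑ t, x j t = 1) ∧
  (∀ t, ∀ v ∈ sBig ε T p t,
    (∑' C : ℝ → ℕ, (C v : ℝ≥0∞) * z C t) ≤
      ∑ j ∈ Finset.univ.filter (fun j => p t j = v), x j t) ∧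
  (∀ t,
    ((m t : ℝ≥0∞) -
        ∑' C : ℝ → ℕ, (if (⌊Tb⌋₊ : ℝ) < sSize ε T p t C then z C t else 0)) *
        ENNReal.ofReal Tb ≤
      (∑' C : ℝ → ℕ,
        (if sSize ε T p t C ≤ (⌊Tb⌋₊ : ℝ) then ENNReal.ofReal (sSize ε T p t C) * z C t
          else 0)) +
      ∑ v ∈ sSmall ε T p t,
        ENNReal.ofReal v * ∑ j ∈ Finset.univ.filter (fun j => p t j = v), x j t)

/-- The machines: `m t` machines of each type `t`. -/
def Machine (m : Fin K → ℕ) : Type := Σ t : Fin K, Fin (m t)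

/-- The load of machine `i` under schedule `σ`. -/
def load (p : Fin K → J → ℝ) (m : Fin K → ℕ) (σ : J → Machine m) (i : Machine m) : ℝ :=
  ∑ j ∈ Finset.univ.filter (fun j => σ j = i), p i.1 j


lemma trunc_aux (B : Finset ℝ) (M L : ℝ) (hL : 0 ≤ L)
    (hvM : ∀ v ∈ B, v ≤ M) :
    ∀ (n : ℕ) (c : ℝ → ℕ), (∑ v ∈ B, c v = n) → L < ∑ v ∈ B, (c v : ℝ) * v →
    ∃ c' : ℝ → ℕ, (∀ v, c' v ≤ c v) ∧ L < ∑ v ∈ B, (c' v : ℝ) * v ∧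
      ∑ v ∈ B, (c' v : ℝ) * v ≤ L + M := by
  intro n
  induction n with
  | zero =>
    intro c hc hlt
    exfalso
    have h0 : ∀ v ∈ B, c v = 0 := by
      intro v hv
      exact (Finset.sum_eq_zero_iff.mp hc) v hv
    have : ∑ v ∈ B, (c v : ℝ) * v = 0 := by
      apply Finset.sum_eq_zero
      intro v hv
      rw [h0 v hv]; simp
    linarith
  | succ n ih =>
    intro c hc hlt
    by_cases h : ∑ v ∈ B, (c v : ℝ) * v ≤ L + M
    · exact ⟨c, fun v => le_rfl, hlt, h⟩
    push_neg at h
    have hex : ∃ v ∈ B, 0 < c v := by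
      by_contra hno
      push_neg at hno
      have : ∑ v ∈ B, (c v : ℝ) * v = 0 := by
        apply Finset.sum_eq_zero
        intro v hv
        have := hno v hv
        have : c v = 0 := by omega
        rw [this]; simp
      linarith
    obtain ⟨v0, hv0B, hv0⟩ := hex
    set c2 : ℝ → ℕ := Function.update c v0 (c v0 - 1) with hc2
    have hc2le : ∀ v, c2 v ≤ c v := by
      intro v
      by_cases hv : v = v0
      · subst hv; simp [hc2]
      · simp [hc2, Function.update_of_ne hv]
    have herase : ∑ v ∈ B.erase v0, (c2 v : ℝ) * v = ∑ v ∈ B.erase v0, (c v : ℝ) * v := by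
      apply Finset.sum_congr rfl
      intro v hv
      rw [hc2, Function.update_of_ne (Finset.mem_erase.mp hv).1]
    have heraseN : ∑ v ∈ B.erase v0, c2 v = ∑ v ∈ B.erase v0, c v := by
      apply Finset.sum_congr rfl
      intro v hv
      rw [hc2, Function.update_of_ne (Finset.mem_erase.mp hv).1]
    have e1 : ∑ v ∈ B, (c v : ℝ) * v = (c v0 : ℝ) * v0 + ∑ v ∈ B.erase v0, (c v : ℝ) * v :=
      (Finset.add_sum_erase _ _ hv0B).symm
    have e2 : ∑ v ∈ B, (c2 v : ℝ) * v
        = ((c v0 : ℝ) - 1) * v0 + ∑ v ∈ B.erase v0, (c v : ℝ) * v := by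
      rw [← Finset.add_sum_erase _ _ hv0B, herase, hc2]
      congr 1
      simp [Nat.cast_sub hv0]
    have eN1 : ∑ v ∈ B, c v = c v0 + ∑ v ∈ B.erase v0, c v :=
      (Finset.add_sum_erase _ _ hv0B).symm
    have eN2 : ∑ v ∈ B, c2 v = (c v0 - 1) + ∑ v ∈ B.erase v0, c v := by
      rw [← Finset.add_sum_erase _ _ hv0B, heraseN, hc2]
      simp
    have hsum2 : ∑ v ∈ B, c2 v = n := by omega
    have hsize2 : ∑ v ∈ B, (c2 v : ℝ) * v = ∑ v ∈ B, (c v : ℝ) * v - v0 := by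
      rw [e2, e1]; ring
    have hlt2 : L < ∑ v ∈ B, (c2 v : ℝ) * v := by
      have := hvM v0 hv0B
      rw [hsize2]; linarith
    obtain ⟨c', hc'le, hc'1, hc'2⟩ := ih c2 hsum2 hlt2
    exact ⟨c', fun v => le_trans (hc'le v) (hc2le v), hc'1, hc'2⟩

lemma per_j {m : Fin K → ℕ} (i : Machine m) (t : Fin K) :
    (if i.1 = t then (1:ℝ≥0∞) else 0)
      = ∑ k : Fin (m t), if i = ⟨t, k⟩ then 1 else 0 := by
  obtain ⟨t', k'⟩ := i
  by_cases h : t' = t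
  · subst h
    have hiff : ∀ k : Fin (m t'), ((⟨t', k'⟩ : Machine m) = ⟨t', k⟩) ↔ k = k' := by
      intro k
      constructor
      · intro h
        exact (eq_of_heq (Sigma.mk.inj_iff.mp h).2).symm
      · intro h
        subst h
        rfl
    rw [Finset.sum_eq_single k']
    · simp
      rfl
    · intro k _ hk
      exact if_neg (fun h => hk ((hiff k).mp h))
    · intro h
      exact absurd (Finset.mem_univ k') h
  · rw [if_neg h]
    symm
    apply Finset.sum_eq_zero
    intro k _
    rw [if_neg]
    intro hk
    exact h (congrArg Sigma.fst hk)

lemma tsum_key {m : Fin K → ℕ} (conf : Machine m → (ℝ → ℕ)) (t : Fin K)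
    (f : (ℝ → ℕ) → ℝ≥0∞) :
    ∑' C : ℝ → ℕ, f C * (∑ k : Fin (m t), if C = conf ⟨t,k⟩ then (1:ℝ≥0∞) else 0)
      = ∑ k : Fin (m t), f (conf ⟨t,k⟩) := by
  have h1 : ∀ C : ℝ → ℕ,
      f C * (∑ k : Fin (m t), if C = conf ⟨t,k⟩ then (1:ℝ≥0∞) else 0)
        = ∑ k : Fin (m t), (if C = conf ⟨t,k⟩ then f (conf ⟨t,k⟩) else 0) := by
    intro C
    rw [Finset.mul_sum]
    apply Finset.sum_congr rfl
    intro k _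
    by_cases h : C = conf ⟨t,k⟩ <;> simp [h]
  calc ∑' C : ℝ → ℕ, f C * (∑ k : Fin (m t), if C = conf ⟨t,k⟩ then (1:ℝ≥0∞) else 0)
      = ∑' C : ℝ → ℕ, ∑ k : Fin (m t), (if C = conf ⟨t,k⟩ then f (conf ⟨t,k⟩) else 0) := by
        exact tsum_congr h1
    _ = ∑ k : Fin (m t), ∑' C : ℝ → ℕ, (if C = conf ⟨t,k⟩ then f (conf ⟨t,k⟩) else 0) := by
        exact Summable.tsum_finsetSum (fun i _ => ENNReal.summable)
    _ = ∑ k : Fin (m t), f (conf ⟨t,k⟩) := by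
        apply Finset.sum_congr rfl
        intro k _
        exact tsum_ite_eq (conf ⟨t,k⟩) (fun _ => f (conf ⟨t,k⟩))

lemma count_eq {m : Fin K → ℕ} (σ : J → Machine m) (t : Fin K) (s : Finset J) :
    ∑ j ∈ s, (if (σ j).1 = t then (1:ℝ≥0∞) else 0)
      = ∑ k : Fin (m t), ((s.filter fun j => σ j = ⟨t,k⟩).card : ℝ≥0∞) := by
  have h : ∀ j ∈ s, (if (σ j).1 = t then (1:ℝ≥0∞) else 0)
      = ∑ k : Fin (m t), if σ j = ⟨t,k⟩ then 1 else 0 := fun j _ => per_j (σ j) t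
  rw [Finset.sum_congr rfl h, Finset.sum_comm]
  apply Finset.sum_congr rfl
  intro k _
  rw [Finset.sum_boole]


/-- A schedule in which every machine has load at least `T̆` yields an
integral feasible solution of the Santa Claus MILP(T̆). -/
theorem schedule_to_santa_MILP (ε T Tb : ℝ) (hε : 0 < ε) (hε1 : ε ≤ 1) (hT : 0 < T)
    (hTb : 0 < Tb) (hTbT : Tb ≤ T)
    (p : Fin K → J → ℝ) (hp : ∀ t j, 0 ≤ p t j ∧ p t j ≤ T)
    (hbigint : ∀ t j, ε ^ 2 * T < p t j → ∃ n : ℕ, 0 < n ∧ p t j = n)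
    (m : Fin K → ℕ)
    (hsched : ∃ σ : J → Machine m, ∀ i, Tb ≤ load p m σ i) :
    ∃ z x, SantaFeasible ε T Tb p m z x ∧
      (∀ C t, ∃ n : ℕ, z C t = n) ∧
      (∀ j t, x j t = 0 ∨ x j t = 1) := by
  classical
  obtain ⟨σ, hσ⟩ := hsched
  set M : ℕ :=
    (((Finset.univ : Finset (Fin K)).biUnion fun t => sBig ε T p t).sup fun v => ⌈v⌉₊) with hM
  -- basic facts about big values
  have hBmem : ∀ t, ∀ v ∈ sBig ε T p t, ∃ n : ℕ, 0 < n ∧ v = n := by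
    intro t v hv
    rw [sBig, Finset.mem_filter, Finset.mem_image] at hv
    obtain ⟨⟨j, _, hj⟩, hbig⟩ := hv
    subst hj
    exact hbigint t j hbig
  have hvM : ∀ t, ∀ v ∈ sBig ε T p t, v ≤ (M : ℝ) := by
    intro t v hv
    obtain ⟨n, hn, hvn⟩ := hBmem t v hv
    have hceil : ⌈v⌉₊ = n := by rw [hvn]; exact Nat.ceil_natCast n
    have hle : ⌈v⌉₊ ≤ M := by
      apply Finset.le_sup
      exact Finset.mem_biUnion.mpr ⟨t, Finset.mem_univ t, hv⟩
    calc v = (n : ℝ) := hvn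
      _ = (⌈v⌉₊ : ℝ) := by rw [hceil]
      _ ≤ (M : ℝ) := Nat.cast_le.mpr hle
  have hv0 : ∀ t, ∀ v ∈ sBig ε T p t, 0 ≤ v := by
    intro t v hv
    obtain ⟨n, hn, hvn⟩ := hBmem t v hv
    rw [hvn]; positivity
  have hsP : sP ε T Tb p = (⌊Tb⌋₊ : ℝ) + (M : ℝ) := rfl
  -- the full configuration of a machine
  set fullC : Machine m → ℝ → ℕ := fun i v =>
    if v ∈ sBig ε T p i.1 then (Finset.univ.filter fun j => σ j = i ∧ p i.1 j = v).card else 0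
    with hfullC
  have hfull_size : ∀ i : Machine m, sSize ε T p i.1 (fullC i)
      = ∑ v ∈ sBig ε T p i.1,
          (((Finset.univ.filter fun j => σ j = i ∧ p i.1 j = v).card : ℝ)) * v := by
    intro i
    apply Finset.sum_congr rfl
    intro v hv
    rw [hfullC]
    simp [hv]
  -- small load of a machine
  set smallload : Machine m → ℝ := fun i =>
    ∑ v ∈ sSmall ε T p i.1, (((Finset.univ.filter fun j => σ j = i ∧ p i.1 j = v).card : ℝ)) * v
    with hsmallload
  have hv0' : ∀ t, ∀ v ∈ sSmall ε T p t, 0 ≤ v := by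
    intro t v hv
    rw [sSmall, Finset.mem_filter, Finset.mem_image] at hv
    obtain ⟨⟨j, _, hj⟩, _⟩ := hv
    subst hj
    exact (hp t j).1
  have hsmall0 : ∀ i, 0 ≤ smallload i := by
    intro i
    apply Finset.sum_nonneg
    intro v hv
    exact mul_nonneg (Nat.cast_nonneg _) (hv0' i.1 v hv)
  -- decomposition of the load
  have hF : ∀ (i : Machine m) (v : ℝ),
      ∑ j ∈ (Finset.univ.filter fun j => σ j = i).filter (fun j => p i.1 j = v), p i.1 j
        = ((Finset.univ.filter fun j => σ j = i ∧ p i.1 j = v).card : ℝ) * v := by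
    intro i v
    rw [Finset.filter_filter]
    have : ∀ j ∈ Finset.univ.filter fun j => σ j = i ∧ p i.1 j = v, p i.1 j = v := by
      intro j hj
      exact (Finset.mem_filter.mp hj).2.2
    rw [Finset.sum_congr rfl this, Finset.sum_const, nsmul_eq_mul]
  have hload : ∀ i : Machine m, sSize ε T p i.1 (fullC i) + smallload i = load p m σ i := by
    intro i
    rw [load,
      ← Finset.sum_fiberwise_of_maps_to (g := p i.1) (t := Finset.univ.image (p i.1))
        (fun j _ => Finset.mem_image_of_mem _ (Finset.mem_univ j)) (p i.1)]
    rw [Finset.sum_congr rfl (fun v _ => hF i v)]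
    rw [← Finset.sum_filter_add_sum_filter_not (Finset.univ.image (p i.1))
      (fun v => ε ^ 2 * T < v)]
    congr 1
    · rw [hfull_size i]
      rfl
    · rw [hsmallload]
      apply Finset.sum_congr
      · apply Finset.filter_congr
        intro v _
        simp [not_lt, sSmall]
      · intro v _
        rfl
  -- truncated configurations
  have hconf : ∀ i : Machine m, ∃ c : ℝ → ℕ, (∀ v, c v ≤ fullC i v) ∧
      sSize ε T p i.1 c ≤ sP ε T Tb p ∧
      (((⌊Tb⌋₊ : ℝ) < sSize ε T p i.1 (fullC i)) → ((⌊Tb⌋₊ : ℝ) < sSize ε T p i.1 c)) ∧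
      ((sSize ε T p i.1 (fullC i) ≤ (⌊Tb⌋₊ : ℝ)) → c = fullC i) := by
    intro i
    by_cases hb : sSize ε T p i.1 (fullC i) ≤ (⌊Tb⌋₊ : ℝ)
    · refine ⟨fullC i, fun v => le_rfl, ?_, fun h => h, fun _ => rfl⟩
      rw [hsP]
      have h0 : (0:ℝ) ≤ (M:ℝ) := Nat.cast_nonneg M
      linarith
    · push_neg at hb
      have hb' : (⌊Tb⌋₊ : ℝ) < ∑ v ∈ sBig ε T p i.1, ((fullC i v : ℝ)) * v := hb
      obtain ⟨c', h1, h2, h3⟩ := trunc_aux (sBig ε T p i.1) (M:ℝ) (⌊Tb⌋₊:ℝ)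
        (Nat.cast_nonneg _) (hvM i.1) (∑ v ∈ sBig ε T p i.1, fullC i v) (fullC i) rfl hb'
      refine ⟨c', h1, ?_, fun _ => h2, fun h => absurd hb (not_lt.mpr h)⟩
      rw [hsP]
      exact h3
  choose conf hcle hcP hcbig hcsmall using hconf
  have hcsupp : ∀ i : Machine m, ∀ v ∉ sBig ε T p i.1, conf i v = 0 := by
    intro i v hv
    have := hcle i v
    rw [hfullC] at this
    simp only [if_neg hv] at this
    omega
  have hcIsConf : ∀ (t : Fin K) (k : Fin (m t)), sIsConf ε T Tb p t (conf ⟨t,k⟩) :=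
    fun t k => ⟨hcsupp ⟨t,k⟩, hcP ⟨t,k⟩⟩
  refine ⟨fun C t => ∑ k : Fin (m t), if C = conf ⟨t,k⟩ then 1 else 0,
    fun j t => if (σ j).1 = t then 1 else 0, ⟨?_, ?_, ?_, ?_, ?_⟩, ?_, ?_⟩
  · -- z vanishes on non-configurations
    intro C t hC
    apply Finset.sum_eq_zero
    intro k _
    rw [if_neg]
    intro hk
    exact hC (hk ▸ hcIsConf t k)
  · -- (1')
    intro t
    have := tsum_key conf t (fun _ => 1)
    simp only [one_mul] at this
    rw [this]
    simp
  · -- (2')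
    intro j
    simp
  · -- (3')
    intro t v hv
    rw [tsum_key conf t (fun C => (C v : ℝ≥0∞)),
      count_eq σ t (Finset.univ.filter fun j => p t j = v)]
    apply Finset.sum_le_sum
    intro k _
    have h1 : conf ⟨t,k⟩ v ≤ fullC ⟨t,k⟩ v := hcle _ _
    have h2 : fullC ⟨t,k⟩ v
        = ((Finset.univ.filter fun j => σ j = ⟨t,k⟩ ∧ p t j = v).card) := by
      rw [hfullC]
      simp only [if_pos hv]
    have h3 : (Finset.univ.filter fun j => p t j = v).filter (fun j => σ j = ⟨t,k⟩)
        = Finset.univ.filter fun j => σ j = ⟨t,k⟩ ∧ p t j = v := by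
      rw [Finset.filter_filter]
      apply Finset.filter_congr
      intro j _
      exact and_comm
    rw [h3, ← h2]
    exact_mod_cast Nat.cast_le.mpr h1
  · -- (4')
    intro t
    set b := (Finset.univ.filter fun k : Fin (m t) =>
      (⌊Tb⌋₊:ℝ) < sSize ε T p t (conf ⟨t,k⟩)) with hb
    set sm := (Finset.univ.filter fun k : Fin (m t) =>
      ¬ ((⌊Tb⌋₊:ℝ) < sSize ε T p t (conf ⟨t,k⟩))) with hsm
    have e1 : (∑' C : ℝ → ℕ, if (⌊Tb⌋₊:ℝ) < sSize ε T p t C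
        then (∑ k : Fin (m t), if C = conf ⟨t,k⟩ then (1:ℝ≥0∞) else 0) else 0)
        = (b.card : ℝ≥0∞) := by
      have hc : ∀ C : ℝ → ℕ, (if (⌊Tb⌋₊:ℝ) < sSize ε T p t C
          then (∑ k : Fin (m t), if C = conf ⟨t,k⟩ then (1:ℝ≥0∞) else 0) else 0)
          = (fun C => if (⌊Tb⌋₊:ℝ) < sSize ε T p t C then (1:ℝ≥0∞) else 0) C
              * (∑ k : Fin (m t), if C = conf ⟨t,k⟩ then (1:ℝ≥0∞) else 0) := by
        intro C
        by_cases h : (⌊Tb⌋₊:ℝ) < sSize ε T p t C <;> simp [h]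
      rw [tsum_congr hc, tsum_key conf t, Finset.sum_boole]
    have e2 : (∑' C : ℝ → ℕ, if sSize ε T p t C ≤ (⌊Tb⌋₊:ℝ)
        then ENNReal.ofReal (sSize ε T p t C)
          * (∑ k : Fin (m t), if C = conf ⟨t,k⟩ then (1:ℝ≥0∞) else 0) else 0)
        = ∑ k ∈ sm, ENNReal.ofReal (sSize ε T p t (conf ⟨t,k⟩)) := by
      have hc : ∀ C : ℝ → ℕ, (if sSize ε T p t C ≤ (⌊Tb⌋₊:ℝ)
          then ENNReal.ofReal (sSize ε T p t C)
            * (∑ k : Fin (m t), if C = conf ⟨t,k⟩ then (1:ℝ≥0∞) else 0) else 0)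
          = (fun C => if sSize ε T p t C ≤ (⌊Tb⌋₊:ℝ)
              then ENNReal.ofReal (sSize ε T p t C) else 0) C
              * (∑ k : Fin (m t), if C = conf ⟨t,k⟩ then (1:ℝ≥0∞) else 0) := by
        intro C
        by_cases h : sSize ε T p t C ≤ (⌊Tb⌋₊:ℝ) <;> simp [h]
      rw [tsum_congr hc, tsum_key conf t, ← Finset.sum_filter]
      apply Finset.sum_congr
      · apply Finset.filter_congr
        intro k _
        rw [not_lt]
      · intro k _
        rfl
    have e3 : ∑ v ∈ sSmall ε T p t, ENNReal.ofReal v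
          * ∑ j ∈ Finset.univ.filter (fun j => p t j = v),
              (if (σ j).1 = t then (1:ℝ≥0∞) else 0)
        = ∑ k : Fin (m t), ENNReal.ofReal (smallload ⟨t,k⟩) := by
      have h1 : ∀ v ∈ sSmall ε T p t, ENNReal.ofReal v
          * ∑ j ∈ Finset.univ.filter (fun j => p t j = v),
              (if (σ j).1 = t then (1:ℝ≥0∞) else 0)
          = ∑ k : Fin (m t), ENNReal.ofReal v
              * ((Finset.univ.filter fun j => σ j = ⟨t,k⟩ ∧ p t j = v).card : ℝ≥0∞) := by
        intro v _
        rw [count_eq σ t _, Finset.mul_sum]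
        apply Finset.sum_congr rfl
        intro k _
        have hset : (Finset.univ.filter fun j => p t j = v).filter (fun j => σ j = ⟨t,k⟩)
            = Finset.univ.filter fun j => σ j = ⟨t,k⟩ ∧ p t j = v := by
          rw [Finset.filter_filter]
          apply Finset.filter_congr
          intro j _
          exact and_comm
        rw [hset]
      rw [Finset.sum_congr rfl h1, Finset.sum_comm]
      apply Finset.sum_congr rfl
      intro k _
      rw [hsmallload]
      rw [ENNReal.ofReal_sum_of_nonneg
        (fun v hv => mul_nonneg (Nat.cast_nonneg _) (hv0' t v hv))]
      apply Finset.sum_congr rfl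
      intro v hv
      rw [ENNReal.ofReal_mul (Nat.cast_nonneg _), ENNReal.ofReal_natCast, mul_comm]
    have hbcard : b.card + sm.card = m t := by
      rw [hb, hsm, Finset.card_filter_add_card_filter_not]
      simp
    have e4 : (↑(m t) : ℝ≥0∞) - ↑b.card = (sm.card : ℝ≥0∞) := by
      have h5 : m t - b.card = sm.card := by omega
      calc (↑(m t) : ℝ≥0∞) - ↑b.card = ↑(m t - b.card) := (ENNReal.natCast_sub _ _).symm
        _ = (sm.card : ℝ≥0∞) := by rw [h5]
    rw [e1, e2, e3, e4]
    calc (↑sm.card : ℝ≥0∞) * ENNReal.ofReal Tb = ∑ _k ∈ sm, ENNReal.ofReal Tb := by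
          rw [Finset.sum_const, nsmul_eq_mul]
      _ ≤ ∑ k ∈ sm, (ENNReal.ofReal (sSize ε T p t (conf ⟨t,k⟩))
            + ENNReal.ofReal (smallload ⟨t,k⟩)) := by
          apply Finset.sum_le_sum
          intro k hk
          have hks : sSize ε T p t (conf ⟨t,k⟩) ≤ (⌊Tb⌋₊:ℝ) :=
            not_lt.mp (Finset.mem_filter.mp hk).2
          have hfs : sSize ε T p t (fullC ⟨t,k⟩) ≤ (⌊Tb⌋₊:ℝ) := by
            by_contra h
            push_neg at h
            exact absurd (hcbig ⟨t,k⟩ h) (not_lt.mpr hks)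
          have hcf : conf ⟨t,k⟩ = fullC ⟨t,k⟩ := hcsmall ⟨t,k⟩ hfs
          have hb0 : 0 ≤ sSize ε T p t (conf ⟨t,k⟩) := by
            apply Finset.sum_nonneg
            intro v hv
            exact mul_nonneg (Nat.cast_nonneg _) (hv0 t v hv)
          rw [← ENNReal.ofReal_add hb0 (hsmall0 ⟨t,k⟩)]
          apply ENNReal.ofReal_le_ofReal
          rw [hcf]
          calc Tb ≤ load p m σ ⟨t,k⟩ := hσ _
            _ = sSize ε T p t (fullC ⟨t,k⟩) + smallload ⟨t,k⟩ := (hload ⟨t,k⟩).symm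
      _ = (∑ k ∈ sm, ENNReal.ofReal (sSize ε T p t (conf ⟨t,k⟩)))
            + ∑ k ∈ sm, ENNReal.ofReal (smallload ⟨t,k⟩) := Finset.sum_add_distrib
      _ ≤ (∑ k ∈ sm, ENNReal.ofReal (sSize ε T p t (conf ⟨t,k⟩)))
            + ∑ k : Fin (m t), ENNReal.ofReal (smallload ⟨t,k⟩) := by
          apply add_le_add le_rfl
          apply Finset.sum_le_sum_of_subset (Finset.filter_subset _ _)
  · -- z integral
    intro C t
    refine ⟨(Finset.univ.filter fun k : Fin (m t) => C = conf ⟨t,k⟩).card, ?_⟩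
    show (∑ k : Fin (m t), if C = conf ⟨t,k⟩ then (1:ℝ≥0∞) else 0) = _
    rw [Finset.sum_boole]
  · -- x integral
    intro j t
    by_cases h : (σ j).1 = t
    · right; simp [h]
    · left; simp [h]
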